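/- arXiv:2503.19919 — 5 statements merged into one kernel-verified Lean document; each statement's English description precedes it below -/
import Mathlib

section
/- For all natural numbers n and j with n ≤ j, the real polynomial P(X) = Σ_{k=1}^{2^n} s_k · (X + k)^j has degree exactly j − n, where s_k = (−1)^{ν(k−1)} and ν(m) denotes the number of ones in the binary expansion of m. -/
/-- Thue–Morse sign: `s k = (-1)^(number of ones in binary expansion of k-1)`. -/
def tmSign (k : ℕ) : ℝ := (-1 : ℝ) ^ ((Nat.digits 2 (k - 1)).sum)

open Polynomial Finset

lemma digitsSum_pow_add : ∀ n m : ℕ, m < 2 ^ n →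
    (Nat.digits 2 (2 ^ n + m)).sum = (Nat.digits 2 m).sum + 1 := by
  intro n
  induction n with
  | zero =>
    intro m hm
    interval_cases m
    simp
  | succ n ih =>
    intro m hm
    have hpos : 0 < 2 ^ (n + 1) + m := by positivity
    rw [Nat.digits_def' (by norm_num) hpos]
    have h2 : (2 ^ (n + 1) + m) % 2 = m % 2 := by
      omega
    have h3 : (2 ^ (n + 1) + m) / 2 = 2 ^ n + m / 2 := by
      omega
    have h4 : m / 2 < 2 ^ n := by
      have : 2 ^ (n + 1) = 2 ^ n * 2 := by ring
      omega
    rw [h2, h3, List.sum_cons, ih _ h4]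
    rcases Nat.eq_zero_or_pos m with hm0 | hm0
    · subst hm0; simp
    · rw [Nat.digits_def' (b := 2) (by norm_num) hm0]
      simp [List.sum_cons]
      ring

lemma tmSign_add_pow {n k : ℕ} (hk : 1 ≤ k) (hk2 : k ≤ 2 ^ n) :
    tmSign (k + 2 ^ n) = - tmSign k := by
  unfold tmSign
  have h1 : k + 2 ^ n - 1 = 2 ^ n + (k - 1) := by omega
  have h2 : k - 1 < 2 ^ n := by omega
  rw [h1, digitsSum_pow_add n (k - 1) h2, pow_succ]
  ring

lemma key_degree (P : ℝ[X]) (c : ℝ) (hc : c ≠ 0) (hd : 1 ≤ P.natDegree) :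
    (P - P.comp (Polynomial.X + Polynomial.C c)).degree = ((P.natDegree - 1 : ℕ) : WithBot ℕ) := by
  set d := P.natDegree with hdd
  have hP0 : P ≠ 0 := fun h => by simp [h, hdd] at hd
  have htay : P.comp (Polynomial.X + Polynomial.C c) = Polynomial.taylor c P := rfl
  -- coefficient at d
  have h1 : (Polynomial.taylor c P).coeff d = P.coeff d := by
    rw [Polynomial.taylor_coeff]
    have hle : (Polynomial.hasseDeriv d P).natDegree ≤ 0 := by
      have := Polynomial.natDegree_hasseDeriv_le P d
      omega
    rw [Polynomial.eq_C_of_natDegree_le_zero hle]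
    simp [Polynomial.hasseDeriv_coeff]
  -- coefficient at d - 1
  have h2 : (Polynomial.taylor c P).coeff (d - 1) = P.coeff (d - 1) + d * P.coeff d * c := by
    rw [Polynomial.taylor_coeff]
    have hle : (Polynomial.hasseDeriv (d - 1) P).natDegree < 2 := by
      have := Polynomial.natDegree_hasseDeriv_le P (d - 1)
      omega
    rw [Polynomial.eval_eq_sum_range' hle]
    rw [Finset.sum_range_succ, Finset.sum_range_one]
    rw [Polynomial.hasseDeriv_coeff, Polynomial.hasseDeriv_coeff]
    have e1 : 0 + (d - 1) = d - 1 := by omega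
    have e2 : 1 + (d - 1) = d := by omega
    rw [e1, e2]
    have e3 : d.choose (d - 1) = d := by
      rw [Nat.choose_symm hd, Nat.choose_one_right]
    simp [Nat.choose_self, e3]
  set Q := P - P.comp (Polynomial.X + Polynomial.C c) with hQ
  have hcoeffd : Q.coeff d = 0 := by
    rw [hQ, Polynomial.coeff_sub, htay, h1, sub_self]
  have hcoeffd1 : Q.coeff (d - 1) = -(d * P.coeff d * c) := by
    rw [hQ, Polynomial.coeff_sub, htay, h2]
    ring
  have hne : Q.coeff (d - 1) ≠ 0 := by
    rw [hcoeffd1]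
    have : P.coeff d ≠ 0 := by
      rw [hdd]
      exact Polynomial.coeff_ne_zero_of_eq_degree (Polynomial.degree_eq_natDegree hP0)
    have hd0 : (d : ℝ) ≠ 0 := by positivity
    simp only [neg_ne_zero]
    exact mul_ne_zero (mul_ne_zero hd0 this) hc
  have hdegle : Q.degree ≤ ((d - 1 : ℕ) : WithBot ℕ) := by
    rw [Polynomial.degree_le_iff_coeff_zero]
    intro m hm
    have hm0 : d - 1 < m := by exact_mod_cast hm
    have hm' : d ≤ m := by omega
    rcases eq_or_lt_of_le hm' with he | hlt
    · rw [← he]; exact hcoeffd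
    · rw [hQ, Polynomial.coeff_sub, htay]
      rw [Polynomial.coeff_eq_zero_of_natDegree_lt (by omega),
        Polynomial.coeff_eq_zero_of_natDegree_lt (by rw [Polynomial.natDegree_taylor]; omega)]
      ring
  exact Polynomial.degree_eq_of_le_of_coeff_ne_zero hdegle hne

theorem stmt0 (n j : ℕ) (h : n ≤ j) :
    (∑ k ∈ Finset.Icc 1 (2 ^ n),
        Polynomial.C (tmSign k) * (Polynomial.X + Polynomial.C (k : ℝ)) ^ j).degree
      = ((j - n : ℕ) : WithBot ℕ) := by
  induction n generalizing j with
  | zero =>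
    simp only [pow_zero, Finset.Icc_self, Finset.sum_singleton]
    have : tmSign 1 = 1 := by simp [tmSign]
    rw [this, map_one, one_mul]
    rw [Polynomial.degree_pow, Polynomial.degree_X_add_C]
    simp
  | succ n ih =>
    set P : ℝ[X] := ∑ k ∈ Finset.Icc 1 (2 ^ n),
        Polynomial.C (tmSign k) * (Polynomial.X + Polynomial.C (k : ℝ)) ^ j with hP
    have hn : n ≤ j := by omega
    have hdegP : P.degree = ((j - n : ℕ) : WithBot ℕ) := ih j hn
    have hP0 : P ≠ 0 := by
      intro h0
      rw [h0, Polynomial.degree_zero] at hdegP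
      exact absurd hdegP (by simp)
    have hndP : P.natDegree = j - n := Polynomial.natDegree_eq_of_degree_eq_some hdegP
    have hd1 : 1 ≤ P.natDegree := by omega
    have hcomp : P.comp (Polynomial.X + Polynomial.C ((2 : ℝ) ^ n)) =
        ∑ k ∈ Finset.Icc 1 (2 ^ n),
          Polynomial.C (tmSign k) * (Polynomial.X + Polynomial.C ((k : ℝ) + 2 ^ n)) ^ j := by
      have : P.comp (Polynomial.X + Polynomial.C ((2 : ℝ) ^ n)) =
          Polynomial.taylor ((2 : ℝ) ^ n) P := rfl
      rw [this, hP, map_sum]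
      refine Finset.sum_congr rfl fun k _ => ?_
      rw [Polynomial.taylor_apply]
      simp only [Polynomial.mul_comp, Polynomial.pow_comp, Polynomial.add_comp,
        Polynomial.X_comp, Polynomial.C_comp]
      rw [add_assoc, ← Polynomial.C_add, add_comm ((2:ℝ)^n) (k:ℝ)]
    have key : (∑ k ∈ Finset.Icc 1 (2 ^ (n + 1)),
          Polynomial.C (tmSign k) * (Polynomial.X + Polynomial.C (k : ℝ)) ^ j)
        = P - P.comp (Polynomial.X + Polynomial.C ((2 : ℝ) ^ n)) := by
      have e1 : ∀ m : ℕ, Finset.Icc 1 m = Finset.Ioc 0 m := fun m => Finset.Icc_add_one_left_eq_Ioc 0 m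
      have hle1 : (0 : ℕ) ≤ 2 ^ n := Nat.zero_le _
      have hle2 : (2 : ℕ) ^ n ≤ 2 ^ (n + 1) := Nat.pow_le_pow_right (by norm_num) (by omega)
      rw [e1]
      rw [← Finset.sum_Ioc_consecutive _ hle1 hle2]
      have hsecond : (∑ k ∈ Finset.Ioc (2 ^ n) (2 ^ (n + 1)),
            Polynomial.C (tmSign k) * (Polynomial.X + Polynomial.C (k : ℝ)) ^ j)
          = - P.comp (Polynomial.X + Polynomial.C ((2 : ℝ) ^ n)) := by
        have hIoc : Finset.Ioc (2 ^ n) (2 ^ (n + 1)) =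
            (Finset.Ioc 0 (2 ^ n)).map (addLeftEmbedding (2 ^ n)) := by
          rw [Finset.map_add_left_Ioc]
          congr 1 <;> omega
        rw [hIoc, Finset.sum_map, hcomp, ← Finset.sum_neg_distrib]
        rw [← e1]
        refine Finset.sum_congr rfl fun k hk => ?_
        simp only [Finset.mem_Icc] at hk
        have hsign : tmSign (2 ^ n + k) = - tmSign k := by
          rw [Nat.add_comm]
          exact tmSign_add_pow hk.1 hk.2
        simp only [addLeftEmbedding_apply, hsign, map_neg, Nat.cast_add, Nat.cast_pow,
          Nat.cast_ofNat]
        ring_nf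
      rw [hsecond, ← e1]
      rw [← hP]
      ring
    rw [key, key_degree P ((2 : ℝ) ^ n) (by positivity) hd1, hndP]
    have : j - n - 1 = j - (n + 1) := by omega
    rw [this]
end

section
/- For all natural numbers j and n with j < n, and for every real number x, the signed sum Σ_{k=1}^{2^n} s_k · (x + k)^j equals 0, where s_k = (−1)^{ν(k−1)} and ν(m) denotes the number of ones in the binary expansion of m. -/
lemma sumdig : ∀ n x : ℕ, x < 2 ^ n →
    (Nat.digits 2 (2 ^ n + x)).sum = (Nat.digits 2 x).sum + 1 := by
  intro n
  induction n with
  | zero =>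
    intro x hx
    interval_cases x
    simp
  | succ n ih =>
    intro x hx
    have h2 : 0 < 2 ^ (n + 1) + x := by positivity
    rw [Nat.digits_def' (by norm_num : 1 < 2) h2]
    have hx2 : x / 2 < 2 ^ n := by
      have : x < 2 ^ n * 2 := by rw [← pow_succ]; exact hx
      omega
    have hmod : (2 ^ (n + 1) + x) % 2 = x % 2 := by
      have : 2 ^ (n + 1) = 2 ^ n * 2 := by rw [pow_succ]
      omega
    have hdiv : (2 ^ (n + 1) + x) / 2 = 2 ^ n + x / 2 := by
      have : 2 ^ (n + 1) = 2 ^ n * 2 := by rw [pow_succ]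
      omega
    rw [hmod, hdiv, List.sum_cons, ih _ hx2]
    rcases Nat.eq_zero_or_pos x with hx0 | hx0
    · simp [hx0]
    · rw [Nat.digits_def' (by norm_num : 1 < 2) hx0, List.sum_cons]
      omega

lemma tm_flip (n m : ℕ) (h1 : 1 ≤ m) (h2 : m ≤ 2 ^ n) :
    tmSign (2 ^ n + m) = - tmSign m := by
  unfold tmSign
  have h : 2 ^ n + m - 1 = 2 ^ n + (m - 1) := by omega
  rw [h, sumdig n (m - 1) (by omega), pow_succ]
  ring

noncomputable def F (n j : ℕ) (x : ℝ) : ℝ :=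
  ∑ k ∈ Finset.Icc 1 (2 ^ n), tmSign k * (x + k) ^ j

lemma F_succ (n j : ℕ) (x : ℝ) : F (n + 1) j x = F n j x - F n j (x + 2 ^ n) := by
  unfold F
  rw [sub_eq_add_neg, ← Finset.sum_neg_distrib]
  simp only [← Finset.Ico_add_one_right_eq_Icc, Finset.sum_Ico_eq_sum_range, Nat.succ_eq_add_one]
  have h1 : 2 ^ (n + 1) + 1 - 1 = 2 ^ n + 2 ^ n := by
    have : 2 ^ (n + 1) = 2 ^ n * 2 := by rw [pow_succ]
    omega
  have h2 : 2 ^ n + 1 - 1 = 2 ^ n := by omega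
  rw [h1, h2, Finset.sum_range_add]
  congr 1
  apply Finset.sum_congr rfl
  intro i hi
  have hi' : i < 2 ^ n := Finset.mem_range.mp hi
  have hflip : tmSign (1 + (2 ^ n + i)) = - tmSign (1 + i) := by
    have : 1 + (2 ^ n + i) = 2 ^ n + (1 + i) := by omega
    rw [this]
    exact tm_flip n (1 + i) (by omega) (by omega)
  rw [hflip]
  have hcast : (x + ↑(1 + (2 ^ n + i)) : ℝ) = (x + 2 ^ n) + ↑(1 + i) := by
    push_cast
    ring
  rw [hcast]
  ring

lemma F_zero : ∀ n j, j < n → ∀ x : ℝ, F n j x = 0 := by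
  intro n
  induction n with
  | zero => omega
  | succ n ih =>
    intro j hj x
    rw [F_succ]
    rcases Nat.lt_or_ge j n with hjn | hjn
    · rw [ih j hjn x, ih j hjn (x + 2 ^ n)]
      ring
    · have hje : j = n := by omega
      subst hje
      have key : F j j (x + 2 ^ j) =
          ∑ i ∈ Finset.range (j + 1),
            (2 ^ j : ℝ) ^ (j - i) * (j.choose i : ℝ) * F j i x := by
        have step1 : F j j (x + 2 ^ j) =
            ∑ k ∈ Finset.Icc 1 (2 ^ j), ∑ i ∈ Finset.range (j + 1),
              tmSign k * ((x + ↑k) ^ i * (2 ^ j : ℝ) ^ (j - i) * (j.choose i : ℝ)) := by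
          unfold F
          apply Finset.sum_congr rfl
          intro k _
          rw [show (x + 2 ^ j + ↑k : ℝ) = (x + ↑k) + 2 ^ j by ring, add_pow,
            Finset.mul_sum]
        rw [step1, Finset.sum_comm]
        apply Finset.sum_congr rfl
        intro i _
        unfold F
        rw [Finset.mul_sum]
        apply Finset.sum_congr rfl
        intro k _
        ring
      rw [key, Finset.sum_range_succ]
      have hz : ∑ i ∈ Finset.range j,
          (2 ^ j : ℝ) ^ (j - i) * (j.choose i : ℝ) * F j i x = 0 := by
        apply Finset.sum_eq_zero
        intro i hi
        rw [ih i (Finset.mem_range.mp hi) x]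
        ring
      rw [hz, Nat.sub_self, Nat.choose_self]
      simp

theorem stmt1 (j n : ℕ) (h : j < n) (x : ℝ) :
    ∑ k ∈ Finset.Icc 1 (2 ^ n), tmSign k * (x + k) ^ j = 0 := by
  have := F_zero n j h x
  unfold F at this
  exact this
end

section
/- Let n be a natural number and let j be a real number with 0 ≤ j < n. Then the function f_n^j(x) = Σ_{k=1}^{2^n} s_k · (x + k)^j (with (x+k)^j the real power for x+k > 0) tends to 0 as x → ∞, where s_k = (−1)^{ν(k−1)} and ν(m) denotes the number of ones in the binary expansion of m. -/
open Filter Finset Real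

/-- Auxiliary function: the Thue–Morse signed sum, indexed from 0. -/
noncomputable def tmF (n : ℕ) (j : ℝ) (x : ℝ) : ℝ :=
  ∑ i ∈ Finset.range (2 ^ n), (-1 : ℝ) ^ ((Nat.digits 2 i).sum) * (x + (i + 1)) ^ j

lemma digitsSum_half (m : ℕ) :
    (Nat.digits 2 m).sum = m % 2 + (Nat.digits 2 (m / 2)).sum := by
  rcases Nat.eq_zero_or_pos m with rfl | hm
  · simp
  · rw [Nat.digits_def' (by norm_num) hm]; simp

lemma digitsSum_add_pow (n : ℕ) : ∀ m : ℕ, m < 2 ^ n →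
    (Nat.digits 2 (2 ^ n + m)).sum = (Nat.digits 2 m).sum + 1 := by
  induction n with
  | zero =>
    intro m hm
    interval_cases m
    simp
  | succ n ih =>
    intro m hm
    have hp : (2 : ℕ) ^ (n + 1) = 2 ^ n * 2 := by ring
    have h1 : (2 ^ (n + 1) + m) % 2 = m % 2 := by omega
    have h2 : (2 ^ (n + 1) + m) / 2 = 2 ^ n + m / 2 := by omega
    have h3 : m / 2 < 2 ^ n := by omega
    rw [digitsSum_half (2 ^ (n + 1) + m), h1, h2, ih _ h3, digitsSum_half m]
    omega

lemma tmF_succ (n : ℕ) (j x : ℝ) :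
    tmF (n + 1) j x = tmF n j x - tmF n j (x + 2 ^ n) := by
  unfold tmF
  have hp : (2 : ℕ) ^ (n + 1) = 2 ^ n + 2 ^ n := by ring
  rw [hp, Finset.sum_range_add]
  have : ∀ i ∈ Finset.range (2 ^ n),
      (-1 : ℝ) ^ ((Nat.digits 2 (2 ^ n + i)).sum) * (x + ((2 ^ n + i : ℕ) + 1)) ^ j
      = -((-1 : ℝ) ^ ((Nat.digits 2 i).sum) * ((x + 2 ^ n) + (i + 1)) ^ j) := by
    intro i hi
    rw [digitsSum_add_pow n i (Finset.mem_range.mp hi)]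
    push_cast
    ring_nf
  rw [Finset.sum_congr rfl this, Finset.sum_neg_distrib]
  ring

lemma tmF_hasDerivAt (n : ℕ) (j : ℝ) {x : ℝ} (hx : 0 < x) :
    HasDerivAt (tmF n j) (j * tmF n (j - 1) x) x := by
  have key : ∀ i ∈ Finset.range (2 ^ n),
      HasDerivAt (fun y : ℝ => (-1 : ℝ) ^ ((Nat.digits 2 i).sum) * (y + (i + 1)) ^ j)
        ((-1 : ℝ) ^ ((Nat.digits 2 i).sum) * (1 * j * (x + (i + 1)) ^ (j - 1))) x := by
    intro i _
    have h1 : HasDerivAt (fun y : ℝ => y + ((i : ℝ) + 1)) 1 x :=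
      (hasDerivAt_id x).add_const _
    have hne : x + ((i : ℝ) + 1) ≠ 0 := by positivity
    exact (h1.rpow_const (Or.inl hne)).const_mul _
  have hsum := HasDerivAt.fun_sum key
  have : (∑ i ∈ Finset.range (2 ^ n),
      (-1 : ℝ) ^ ((Nat.digits 2 i).sum) * (1 * j * (x + (i + 1)) ^ (j - 1)))
      = j * tmF n (j - 1) x := by
    unfold tmF
    rw [Finset.mul_sum]
    exact Finset.sum_congr rfl fun i _ => by ring
  rw [this] at hsum
  exact hsum

lemma tmF_bound (n : ℕ) : ∀ j : ℝ, ∃ C : ℝ, 0 ≤ C ∧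
    ∀ x : ℝ, 1 ≤ x → |tmF n j x| ≤ C * x ^ (j - n) := by
  induction n with
  | zero =>
    intro j
    refine ⟨2 ^ j + 1, by positivity, fun x hx => ?_⟩
    have hx0 : (0 : ℝ) < x := by linarith
    have h1 : tmF 0 j x = (x + 1) ^ j := by
      unfold tmF; norm_num
    have hpos : (0 : ℝ) ≤ (x + 1) ^ j := Real.rpow_nonneg (by linarith) j
    rw [h1, abs_of_nonneg hpos]
    have hxj : (0 : ℝ) < x ^ j := Real.rpow_pos_of_pos hx0 j
    have hcast : ((0 : ℕ) : ℝ) = 0 := by norm_num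
    rw [hcast, sub_zero]
    rcases le_or_gt 0 j with hj | hj
    · have h2 : (x + 1) ^ j ≤ (2 * x) ^ j :=
        Real.rpow_le_rpow (by linarith) (by linarith) hj
      have h3 : (2 * x) ^ j = 2 ^ j * x ^ j :=
        Real.mul_rpow (by norm_num) (le_of_lt hx0)
      nlinarith
    · have h2 : (x + 1) ^ j ≤ x ^ j :=
        Real.rpow_le_rpow_of_nonpos hx0 (by linarith) (le_of_lt hj)
      have h4 : (0 : ℝ) < 2 ^ j := Real.rpow_pos_of_pos (by norm_num) j
      nlinarith
  | succ n ih =>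
    intro j
    obtain ⟨C, hC, hbound⟩ := ih (j - 1)
    set e : ℝ := j - 1 - n with he
    refine ⟨|j| * C * ((1 + 2 ^ n) ^ e + 1) * 2 ^ n, by positivity, fun x hx => ?_⟩
    have hx0 : (0 : ℝ) < x := by linarith
    have h2n : (0 : ℝ) < 2 ^ n := by positivity
    set D : ℝ := |j| * C * ((1 + 2 ^ n) ^ e + 1) * x ^ e with hD
    have hxe : (0 : ℝ) < x ^ e := Real.rpow_pos_of_pos hx0 e
    -- bound on derivative over Icc x (x + 2^n)
    have hderiv_bound : ∀ y ∈ Set.Icc x (x + 2 ^ n), ‖j * tmF n (j - 1) y‖ ≤ D := by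
      intro y hy
      obtain ⟨hy1, hy2⟩ := hy
      have hy0 : (1 : ℝ) ≤ y := le_trans hx hy1
      have hb := hbound y hy0
      have hye : y ^ e ≤ ((1 + 2 ^ n) ^ e + 1) * x ^ e := by
        rcases le_or_gt 0 e with he0 | he0
        · have hle : y ≤ x * (1 + 2 ^ n) := by nlinarith
          have := Real.rpow_le_rpow (by linarith) hle he0
          rw [Real.mul_rpow (le_of_lt hx0) (by positivity)] at this
          nlinarith [Real.rpow_pos_of_pos (show (0:ℝ) < 1 + 2^n by positivity) e]
        · have := Real.rpow_le_rpow_of_nonpos hx0 hy1 (le_of_lt he0)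
          nlinarith [Real.rpow_pos_of_pos (show (0:ℝ) < 1 + 2^n by positivity) e]
      have hya : |tmF n (j - 1) y| ≤ C * y ^ e := hb
      rw [norm_mul, Real.norm_eq_abs, Real.norm_eq_abs, hD]
      calc |j| * |tmF n (j - 1) y| ≤ |j| * (C * y ^ e) :=
            mul_le_mul_of_nonneg_left hya (abs_nonneg j)
        _ ≤ |j| * (C * (((1 + 2 ^ n) ^ e + 1) * x ^ e)) := by
            have : C * y ^ e ≤ C * (((1 + 2 ^ n) ^ e + 1) * x ^ e) :=
              mul_le_mul_of_nonneg_left hye hC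
            exact mul_le_mul_of_nonneg_left this (abs_nonneg j)
        _ = |j| * C * ((1 + 2 ^ n) ^ e + 1) * x ^ e := by ring
    -- mean value theorem
    have hconv : Convex ℝ (Set.Icc x (x + 2 ^ n)) := convex_Icc _ _
    have hder : ∀ y ∈ Set.Icc x (x + 2 ^ n),
        HasDerivWithinAt (tmF n j) (j * tmF n (j - 1) y) (Set.Icc x (x + 2 ^ n)) y := by
      intro y hy
      exact (tmF_hasDerivAt n j (by linarith [hy.1])).hasDerivWithinAt
    have hmvt := hconv.norm_image_sub_le_of_norm_hasDerivWithin_le hder hderiv_bound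
      (Set.left_mem_Icc.mpr (by linarith)) (Set.right_mem_Icc.mpr (by linarith))
    rw [tmF_succ]
    have h1 : |tmF n j x - tmF n j (x + 2 ^ n)| = ‖tmF n j (x + 2 ^ n) - tmF n j x‖ := by
      rw [Real.norm_eq_abs, abs_sub_comm]
    rw [h1]
    have h2 : ‖x + 2 ^ n - x‖ = 2 ^ n := by
      rw [Real.norm_eq_abs]
      rw [show x + 2 ^ n - x = (2 : ℝ) ^ n by ring]
      exact abs_of_pos h2n
    rw [h2] at hmvt
    have hex : x ^ e = x ^ (j - ((n : ℕ) + 1 : ℕ)) := by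
      congr 1
      push_cast
      ring
    calc ‖tmF n j (x + 2 ^ n) - tmF n j x‖ ≤ D * 2 ^ n := hmvt
      _ = |j| * C * ((1 + 2 ^ n) ^ e + 1) * 2 ^ n * x ^ e := by rw [hD]; ring
      _ = |j| * C * ((1 + 2 ^ n) ^ e + 1) * 2 ^ n * x ^ (j - ((n + 1 : ℕ) : ℝ)) := by
          rw [hex]

theorem stmt3 (n : ℕ) (j : ℝ) (hj0 : 0 ≤ j) (hjn : j < n) :
    Filter.Tendsto (fun x : ℝ => ∑ k ∈ Finset.Icc 1 (2 ^ n), tmSign k * (x + k) ^ j)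
      Filter.atTop (nhds 0) := by
  have heq : ∀ x : ℝ, ∑ k ∈ Finset.Icc 1 (2 ^ n), tmSign k * (x + k) ^ j = tmF n j x := by
    intro x
    rw [← Finset.Ico_add_one_right_eq_Icc, Finset.sum_Ico_eq_sum_range]
    unfold tmF
    have : 2 ^ n + 1 - 1 = 2 ^ n := by simp
    rw [this]
    refine Finset.sum_congr rfl fun i _ => ?_
    unfold tmSign
    have : 1 + i - 1 = i := by omega
    rw [this]
    push_cast
    ring_nf
  obtain ⟨C, hC, hbound⟩ := tmF_bound n j
  have hlim : Filter.Tendsto (fun x : ℝ => C * x ^ (j - n)) Filter.atTop (nhds 0) := by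
    have hneg : (0 : ℝ) < (n : ℝ) - j := by linarith
    have := (tendsto_rpow_neg_atTop hneg).const_mul C
    simpa [mul_zero, show -((n : ℝ) - j) = j - n by ring] using this
  apply squeeze_zero_norm' _ hlim
  filter_upwards [Filter.eventually_ge_atTop (1 : ℝ)] with x hx
  rw [heq x]
  exact hbound x hx
end

section
/- Let n be a natural number and let m be any integer. Define S₁ = {k : 1 ≤ k ≤ 2^n, s_k = 1} and S₂ = {k : 1 ≤ k ≤ 2^n, s_k = −1}, where s_k = (−1)^{ν(k−1)} and ν(a) is the number of ones in the binary expansion of a. Then for every natural number j with j < n, Σ_{k ∈ S₁} (m + k)^j = Σ_{k ∈ S₂} (m + k)^j. In particular, any 2^n consecutive integers can be partitioned into two sets whose sums of j-th powers agree for all j = 0, 1, …, n−1. -/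
def eps (k : ℕ) : ℤ := (-1) ^ ((Nat.digits 2 k).sum)

lemma ds_rec (k : ℕ) : (Nat.digits 2 k).sum = k % 2 + (Nat.digits 2 (k / 2)).sum := by
  rcases Nat.eq_zero_or_pos k with h | h
  · simp [h]
  · rw [Nat.digits_def' (by norm_num) h]; simp

lemma ds_add_pow : ∀ n k, k < 2 ^ n → (Nat.digits 2 (k + 2 ^ n)).sum = (Nat.digits 2 k).sum + 1 := by
  intro n
  induction n with
  | zero => intro k hk; interval_cases k; simp
  | succ n ih =>
    intro k hk
    have e : 2 ^ (n + 1) = 2 * 2 ^ n := by ring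
    rw [ds_rec (k + 2 ^ (n + 1)), ds_rec k]
    have h1 : (k + 2 ^ (n + 1)) % 2 = k % 2 := by omega
    have h2 : (k + 2 ^ (n + 1)) / 2 = k / 2 + 2 ^ n := by omega
    rw [h1, h2, ih (k / 2) (by omega)]
    ring

lemma eps_add_pow (n k : ℕ) (hk : k < 2 ^ n) : eps (2 ^ n + k) = - eps k := by
  unfold eps
  rw [add_comm, ds_add_pow n k hk, pow_succ]
  ring

lemma key : ∀ n j, j < n → ∀ m : ℤ,
    ∑ k ∈ Finset.range (2 ^ n), eps k * (m + k) ^ j = 0 := by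
  intro n
  induction n with
  | zero => intro j hj; omega
  | succ n ih =>
    intro j hj m
    have hsplit : ∑ k ∈ Finset.range (2 ^ (n + 1)), eps k * (m + k) ^ j
        = ∑ k ∈ Finset.range (2 ^ n), eps k * (m + k) ^ j
          + ∑ k ∈ Finset.range (2 ^ n), eps (2 ^ n + k) * (m + ((2 ^ n : ℕ) + k : ℕ)) ^ j := by
      rw [pow_succ, mul_two, Finset.sum_range_add]
    have hneg : ∑ k ∈ Finset.range (2 ^ n), eps (2 ^ n + k) * (m + ((2 ^ n : ℕ) + k : ℕ)) ^ j
        = - ∑ k ∈ Finset.range (2 ^ n), eps k * ((m + 2 ^ n) + k) ^ j := by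
      rw [← Finset.sum_neg_distrib]
      apply Finset.sum_congr rfl
      intro k hk
      rw [eps_add_pow n k (Finset.mem_range.mp hk)]
      push_cast
      ring
    rw [hsplit, hneg]
    rcases lt_or_eq_of_le (Nat.lt_succ_iff.mp hj) with h | h
    · rw [ih j h m, ih j h (m + 2 ^ n)]; ring
    · subst h
      have shift : ∑ k ∈ Finset.range (2 ^ j), eps k * ((m + 2 ^ j) + k) ^ j
          = ∑ k ∈ Finset.range (2 ^ j), eps k * (m + k) ^ j := by
        have expand : ∀ k ∈ Finset.range (2 ^ j),
            eps k * ((m + 2 ^ j) + k) ^ j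
              = ∑ i ∈ Finset.range (j + 1),
                  ((2 ^ j : ℤ) ^ (j - i) * (j.choose i)) * (eps k * (m + k) ^ i) := by
          intro k _
          rw [show (m + 2 ^ j) + (k : ℤ) = (m + k) + 2 ^ j by ring, add_pow,
            Finset.mul_sum]
          apply Finset.sum_congr rfl
          intro i _
          ring
        rw [Finset.sum_congr rfl expand, Finset.sum_comm]
        rw [Finset.sum_range_succ]
        have hz : ∑ i ∈ Finset.range j,
            (∑ k ∈ Finset.range (2 ^ j),
              ((2 ^ j : ℤ) ^ (j - i) * (j.choose i)) * (eps k * (m + k) ^ i)) = 0 := by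
          apply Finset.sum_eq_zero
          intro i hi
          rw [← Finset.mul_sum, ih i (Finset.mem_range.mp hi) m, mul_zero]
        rw [hz, zero_add]
        simp [Finset.mul_sum]
      rw [shift]
      ring

lemma tmSign_eq (k : ℕ) : tmSign k = ((eps (k - 1) : ℤ) : ℝ) := by
  unfold tmSign eps; push_cast; ring

theorem stmt7 (n : ℕ) (m : ℤ) (j : ℕ) (hj : j < n) :
    ∑ k ∈ (Finset.Icc 1 (2 ^ n)).filter (fun k => tmSign k = 1), (m + k) ^ j
      = ∑ k ∈ (Finset.Icc 1 (2 ^ n)).filter (fun k => tmSign k = -1), (m + k) ^ j := by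
  have htotal : ∑ k ∈ Finset.Icc 1 (2 ^ n), eps (k - 1) * (m + k) ^ j = 0 := by
    rw [← Finset.Ico_add_one_right_eq_Icc, Finset.sum_Ico_eq_sum_range]
    have : ∀ i ∈ Finset.range (2 ^ n + 1 - 1),
        eps (1 + i - 1) * (m + ((1 + i : ℕ) : ℤ)) ^ j = eps i * ((m + 1) + i) ^ j := by
      intro i _
      congr 1
      · congr 1; omega
      · push_cast; ring
    rw [Finset.sum_congr rfl this]
    have h2 : 2 ^ n + 1 - 1 = 2 ^ n := by simp
    rw [h2]
    exact key n j hj (m + 1)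
  have hpm : ∀ k, tmSign k = 1 ∨ tmSign k = -1 := by
    intro k
    unfold tmSign
    rcases Nat.even_or_odd ((Nat.digits 2 (k - 1)).sum) with h | h
    · left; exact h.neg_one_pow
    · right; exact h.neg_one_pow
  have hsplit := Finset.sum_filter_add_sum_filter_not (Finset.Icc 1 (2 ^ n))
      (fun k => tmSign k = 1) (fun k => eps (k - 1) * (m + k) ^ j)
  have h1 : ∑ k ∈ (Finset.Icc 1 (2 ^ n)).filter (fun k => tmSign k = 1),
      eps (k - 1) * (m + k) ^ j
      = ∑ k ∈ (Finset.Icc 1 (2 ^ n)).filter (fun k => tmSign k = 1), (m + k) ^ j := by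
    apply Finset.sum_congr rfl
    intro k hk
    have h := (Finset.mem_filter.mp hk).2
    rw [tmSign_eq] at h
    have : eps (k - 1) = 1 := by exact_mod_cast h
    rw [this]; ring
  have hfilt : (Finset.Icc 1 (2 ^ n)).filter (fun k => ¬ tmSign k = 1)
      = (Finset.Icc 1 (2 ^ n)).filter (fun k => tmSign k = -1) := by
    apply Finset.filter_congr
    intro k _
    rcases hpm k with h | h <;> simp [h] <;> norm_num
  have h2 : ∑ k ∈ (Finset.Icc 1 (2 ^ n)).filter (fun k => ¬ tmSign k = 1),
      eps (k - 1) * (m + k) ^ j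
      = - ∑ k ∈ (Finset.Icc 1 (2 ^ n)).filter (fun k => tmSign k = -1), (m + k) ^ j := by
    rw [hfilt, ← Finset.sum_neg_distrib]
    apply Finset.sum_congr rfl
    intro k hk
    have h := (Finset.mem_filter.mp hk).2
    rw [tmSign_eq] at h
    have : eps (k - 1) = -1 := by exact_mod_cast h
    rw [this]; ring
  rw [h1, h2] at hsplit
  linarith [htotal, hsplit]
end

section
/- Let n be a natural number, let j ≥ 0 be a real number, and let x be a real number with x > 2^n. Then Σ_{k=1}^{2^n} s_k · (x + k)^j = x^j · Σ_{i=0}^{∞} C(j, i) · x^{−i} · (Σ_{k=1}^{2^n} s_k · k^i), where the series on the right converges, C(j, i) = (Π_{l=0}^{i−1} (j − l)) / i! is the generalized binomial coefficient, s_k = (−1)^{ν(k−1)}, ν(m) is the number of ones in the binary expansion of m, and (x+k)^j and x^j are real powers (rpow) on positive bases. -/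
/-- Generalized binomial coefficient `C(j, i) = j(j-1)⋯(j-i+1)/i!` for real `j`. -/
noncomputable def genBinom (j : ℝ) (i : ℕ) : ℝ := (∏ l ∈ Finset.range i, (j - l)) / (Nat.factorial i)

lemma genBinom_zero (j : ℝ) : genBinom j 0 = 1 := by simp [genBinom]

lemma genBinom_succ (j : ℝ) (i : ℕ) :
    ((i : ℝ) + 1) * genBinom j (i + 1) = (j - i) * genBinom j i := by
  have h : (Nat.factorial i : ℝ) ≠ 0 := by exact_mod_cast (Nat.factorial_pos i).ne'
  simp only [genBinom, Finset.prod_range_succ, Nat.factorial_succ]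
  push_cast
  field_simp

lemma genBinom_succ_eq (j : ℝ) (i : ℕ) :
    genBinom j (i + 1) = (j - i) * genBinom j i / ((i : ℝ) + 1) := by
  rw [eq_div_iff (by positivity : ((i:ℝ)+1) ≠ 0), ← genBinom_succ j i]; ring

lemma genBinom_abs_le_min (j : ℝ) (hj : 0 ≤ j) (i : ℕ) :
    |genBinom j i| ≤ (max 1 j) ^ (min i ⌈j⌉₊) := by
  have hK : (1:ℝ) ≤ max 1 j := le_max_left _ _
  induction i with
  | zero => simp [genBinom]
  | succ i ih =>
    have hi0 : (0:ℝ) ≤ (i:ℝ) := i.cast_nonneg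
    have habs : |genBinom j (i+1)| = |j - i| / ((i:ℝ)+1) * |genBinom j i| := by
      rw [genBinom_succ_eq, abs_div, abs_mul, abs_of_pos (by positivity : (0:ℝ) < (i:ℝ)+1)]
      ring
    by_cases hi : i < ⌈j⌉₊
    · have hij : (i : ℝ) < j := Nat.lt_ceil.mp hi
      have h1 : |j - i| / ((i:ℝ)+1) ≤ max 1 j := by
        rw [abs_of_pos (by linarith)]
        calc (j-i)/((i:ℝ)+1) ≤ j - i := div_le_self (by linarith) (by linarith)
        _ ≤ j := by linarith
        _ ≤ max 1 j := le_max_right _ _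
      rw [min_eq_left (Nat.le_of_lt hi)] at ih
      rw [min_eq_left (Nat.succ_le_of_lt hi), habs, pow_succ]
      calc |j - i| / ((i:ℝ)+1) * |genBinom j i| ≤ max 1 j * (max 1 j) ^ i :=
            mul_le_mul h1 ih (abs_nonneg _) (by linarith)
        _ = (max 1 j) ^ i * max 1 j := by ring
    · have hN : ⌈j⌉₊ ≤ i := Nat.le_of_not_lt hi
      have hji : j ≤ (i:ℝ) := le_trans (Nat.le_ceil j) (by exact_mod_cast hN)
      have h1 : |j - i| / ((i:ℝ)+1) ≤ 1 := by
        rw [abs_of_nonpos (by linarith)]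
        rw [div_le_one (by positivity)]
        linarith
      rw [min_eq_right hN] at ih
      rw [min_eq_right (le_trans hN (Nat.le_succ i)), habs]
      calc |j - i| / ((i:ℝ)+1) * |genBinom j i| ≤ 1 * (max 1 j) ^ ⌈j⌉₊ :=
            mul_le_mul h1 ih (abs_nonneg _) zero_le_one
        _ = (max 1 j) ^ ⌈j⌉₊ := one_mul _

lemma genBinom_abs_le (j : ℝ) (hj : 0 ≤ j) (i : ℕ) :
    |genBinom j i| ≤ (max 1 j) ^ ⌈j⌉₊ :=
  le_trans (genBinom_abs_le_min j hj i)
    (pow_le_pow_right₀ (le_max_left 1 j) (min_le_right _ _))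

section Summability

variable {j ρ : ℝ}

lemma summable_M_geom (M : ℝ) {ρ : ℝ} (h0 : 0 ≤ ρ) (h1 : ρ < 1) :
    Summable (fun i : ℕ => M * ρ ^ i) :=
  (summable_geometric_of_lt_one h0 h1).mul_left M

lemma summable_M_i_geom (M : ℝ) {ρ : ℝ} (h0 : 0 ≤ ρ) (h1 : ρ < 1) :
    Summable (fun i : ℕ => M * ((i : ℝ) * ρ ^ i)) := by
  have h : Summable (fun i : ℕ => (i:ℝ) ^ 1 * ρ ^ i) :=
    summable_pow_mul_geometric_of_norm_lt_one 1 (by rwa [Real.norm_eq_abs, abs_of_nonneg h0])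
  simpa [pow_one] using h.mul_left M

lemma summable_M_i_geom' (M : ℝ) {ρ : ℝ} (h0 : 0 ≤ ρ) (h1 : ρ < 1) :
    Summable (fun i : ℕ => M * ((i : ℝ) * ρ ^ (i - 1))) := by
  rw [← summable_nat_add_iff 1]
  have h : Summable (fun i : ℕ => M * ((i:ℝ) * ρ ^ i) + M * ρ ^ i) :=
    (summable_M_i_geom M h0 h1).add (summable_M_geom M h0 h1)
  refine h.congr fun i => ?_
  simp only [Nat.add_sub_cancel]
  push_cast
  ring

lemma summable_genBinom_pow (hj : 0 ≤ j) (h0 : 0 ≤ ρ) (h1 : ρ < 1) {z : ℝ} (hz : |z| ≤ ρ) :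
    Summable (fun i : ℕ => genBinom j i * z ^ i) := by
  refine Summable.of_norm_bounded (summable_M_geom ((max 1 j) ^ ⌈j⌉₊) h0 h1) fun i => ?_
  rw [Real.norm_eq_abs, abs_mul, abs_pow]
  exact mul_le_mul (genBinom_abs_le j hj i) (pow_le_pow_left₀ (abs_nonneg z) hz i)
    (pow_nonneg (abs_nonneg z) i) (by positivity)

lemma summable_genBinom_deriv (hj : 0 ≤ j) (h0 : 0 ≤ ρ) (h1 : ρ < 1) {z : ℝ} (hz : |z| ≤ ρ) :
    Summable (fun i : ℕ => genBinom j i * ((i : ℝ) * z ^ (i - 1))) := by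
  refine Summable.of_norm_bounded (summable_M_i_geom' ((max 1 j) ^ ⌈j⌉₊) h0 h1) fun i => ?_
  rw [Real.norm_eq_abs, abs_mul, abs_mul, abs_pow, Nat.abs_cast]
  exact mul_le_mul (genBinom_abs_le j hj i)
    (mul_le_mul_of_nonneg_left (pow_le_pow_left₀ (abs_nonneg z) hz _) (Nat.cast_nonneg i))
    (by positivity) (by positivity)

lemma summable_genBinom_i_pow (hj : 0 ≤ j) (h0 : 0 ≤ ρ) (h1 : ρ < 1) {z : ℝ} (hz : |z| ≤ ρ) :
    Summable (fun i : ℕ => genBinom j i * ((i : ℝ) * z ^ i)) := by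
  refine Summable.of_norm_bounded (summable_M_i_geom ((max 1 j) ^ ⌈j⌉₊) h0 h1) fun i => ?_
  rw [Real.norm_eq_abs, abs_mul, abs_mul, abs_pow, Nat.abs_cast]
  exact mul_le_mul (genBinom_abs_le j hj i)
    (mul_le_mul_of_nonneg_left (pow_le_pow_left₀ (abs_nonneg z) hz _) (Nat.cast_nonneg i))
    (by positivity) (by positivity)

end Summability

set_option maxHeartbeats 1000000 in
lemma hasSum_genBinom (j : ℝ) (hj : 0 ≤ j) {t : ℝ} (ht0 : 0 ≤ t) (ht1 : t < 1) :
    HasSum (fun i => genBinom j i * t ^ i) ((1 + t) ^ j) := by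
  set ρ := (t + 1) / 2 with hρdef
  have hρ0 : 0 < ρ := by rw [hρdef]; linarith
  have hρ1 : ρ < 1 := by rw [hρdef]; linarith
  have htρ : t < ρ := by rw [hρdef]; linarith
  set s : Set ℝ := Set.Ioo (-ρ) ρ with hsdef
  have hmem : ∀ z ∈ s, |z| ≤ ρ := fun z hz => le_of_lt (abs_lt.mpr ⟨hz.1, hz.2⟩)
  set F : ℝ → ℝ := fun z => ∑' i, genBinom j i * z ^ i with hF
  set F' : ℝ → ℝ := fun z => ∑' i, genBinom j i * ((i:ℝ) * z ^ (i-1)) with hF'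
  have h0s : (0:ℝ) ∈ s := ⟨by simpa using hρ0, hρ0⟩
  have hderiv : ∀ z ∈ s, HasDerivAt F (F' z) z := by
    intro z hz
    have hu : Summable (fun i : ℕ => ((max 1 j) ^ ⌈j⌉₊) * ((i : ℝ) * ρ ^ (i - 1))) :=
      summable_M_i_geom' ((max 1 j) ^ ⌈j⌉₊) hρ0.le hρ1
    have hg : ∀ (i : ℕ), ∀ y ∈ s,
        HasDerivAt (fun w : ℝ => genBinom j i * w ^ i)
          (genBinom j i * ((i:ℝ) * y ^ (i-1))) y := fun i y _ =>
      (hasDerivAt_pow i y).const_mul (genBinom j i)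
    have hg' : ∀ (i : ℕ), ∀ y ∈ s,
        ‖genBinom j i * ((i:ℝ) * y ^ (i-1))‖ ≤ ((max 1 j) ^ ⌈j⌉₊) * ((i : ℝ) * ρ ^ (i - 1)) := by
      intro i y hy
      rw [Real.norm_eq_abs, abs_mul, abs_mul, abs_pow, Nat.abs_cast]
      exact mul_le_mul (genBinom_abs_le j hj i)
        (mul_le_mul_of_nonneg_left (pow_le_pow_left₀ (abs_nonneg y) (hmem y hy) _)
          (Nat.cast_nonneg i))
        (by positivity) (by positivity)
    have hg0 : Summable (fun i : ℕ => genBinom j i * (0:ℝ) ^ i) :=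
      summable_genBinom_pow hj hρ0.le hρ1 (z := 0) (by simpa using hρ0.le)
    exact hasDerivAt_tsum_of_isPreconnected hu isOpen_Ioo
      (convex_Ioo _ _).isPreconnected hg hg' h0s hg0 hz
  have hfe : ∀ z ∈ s, (1 + z) * F' z = j * F z := by
    intro z hz
    have hzρ := hmem z hz
    have A := summable_genBinom_pow hj hρ0.le hρ1 hzρ
    have B := summable_genBinom_deriv hj hρ0.le hρ1 hzρ
    have C := summable_genBinom_i_pow hj hρ0.le hρ1 hzρ
    have hBshift : Summable (fun i : ℕ => genBinom j (i+1) * (((i:ℝ)+1) * z ^ i)) := by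
      refine ((summable_nat_add_iff 1).mpr B).congr fun i => ?_
      simp only [Nat.add_sub_cancel]
      push_cast
      ring
    have h1 : z * F' z = ∑' i, genBinom j i * ((i:ℝ) * z ^ i) := by
      simp only [hF']
      rw [← tsum_mul_left]
      refine tsum_congr fun i => ?_
      cases i with
      | zero => simp
      | succ m =>
        simp only [Nat.succ_sub_one]
        rw [pow_succ]
        ring
    have h2 : F' z = ∑' i, genBinom j (i+1) * (((i:ℝ)+1) * z ^ i) := by
      simp only [hF']
      rw [Summable.tsum_eq_zero_add B]
      simp only [Nat.cast_zero, zero_mul, mul_zero, zero_add, Nat.add_sub_cancel]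
      push_cast
      rfl
    have h3 : (1 + z) * F' z = ∑' i, j * (genBinom j i * z ^ i) := by
      have e1 : (1 + z) * F' z = F' z + z * F' z := by ring
      rw [e1, h1, h2, ← Summable.tsum_add hBshift C]
      refine tsum_congr fun i => ?_
      have h := genBinom_succ j i
      have hcoef : genBinom j (i+1) * ((i:ℝ)+1) = (j - i) * genBinom j i := by
        rw [← h]; ring
      calc genBinom j (i+1) * (((i:ℝ)+1) * z ^ i) + genBinom j i * ((i:ℝ) * z ^ i)
          = (genBinom j (i+1) * ((i:ℝ)+1) + genBinom j i * (i:ℝ)) * z ^ i := by ring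
        _ = ((j - i) * genBinom j i + genBinom j i * (i:ℝ)) * z ^ i := by rw [hcoef]
        _ = j * (genBinom j i * z ^ i) := by ring
    rw [h3, tsum_mul_left]
  have hG : ∀ z ∈ s, HasDerivAt (fun y => F y * (1+y) ^ (-j)) 0 z := by
    intro z hz
    have hz1 : -ρ < z := hz.1
    have h1z : 0 < 1 + z := by linarith
    have hd1 : HasDerivAt (fun y : ℝ => (1+y) ^ (-j)) (-j * (1+z)^(-j-1) * 1) z := by
      have hb : HasDerivAt (fun y : ℝ => 1 + y) 1 z := (hasDerivAt_id z).const_add 1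
      have := hb.rpow_const (p := -j) (Or.inl h1z.ne')
      simpa using this
    have hmul := (hderiv z hz).mul hd1
    convert hmul using 1
    · rfl
    · rfl
    · rfl
    have key := hfe z hz
    have e : (1+z)^(-j) = (1+z)^(-j-1) * (1+z) := by
      rw [← Real.rpow_add_one h1z.ne' (-j-1)]
      ring_nf
    rw [e]
    linear_combination (-(1+z)^(-j-1)) * key
  have hts : Set.Icc (0:ℝ) t ⊆ s := fun y hy =>
    ⟨by have := hy.1; linarith, by have := hy.2; linarith⟩
  have hF0 : F 0 = 1 := by
    simp only [hF]
    rw [tsum_eq_single 0 ?_]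
    · simp [genBinom_zero]
    · intro i hi
      cases i with
      | zero => exact absurd rfl hi
      | succ m => simp
  have heq : ∀ y ∈ Set.Icc (0:ℝ) t, F y * (1+y)^(-j) = (fun _ : ℝ => (1:ℝ)) y := by
    refine eq_of_has_deriv_right_eq (f' := fun _ => (0:ℝ))
      (fun y hy => (hG y (hts ⟨hy.1, hy.2.le⟩)).hasDerivWithinAt)
      (fun y hy => (hasDerivAt_const y (1:ℝ)).hasDerivWithinAt)
      (fun y hy => (hG y (hts hy)).continuousAt.continuousWithinAt)
      continuousOn_const ?_
    simp [hF0]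
  have ht' : F t * (1+t)^(-j) = 1 := heq t ⟨ht0, le_refl t⟩
  have h1t : 0 < 1 + t := by linarith
  have hFt : F t = (1+t)^j := by
    have hpos : 0 < (1+t)^j := Real.rpow_pos_of_pos h1t j
    rw [Real.rpow_neg h1t.le] at ht'
    field_simp at ht'
    exact ht'
  rw [← hFt]
  exact (summable_genBinom_pow hj hρ0.le hρ1
    (by rw [abs_of_nonneg ht0]; exact htρ.le)).hasSum

theorem stmt8 (n : ℕ) (j : ℝ) (hj : 0 ≤ j) (x : ℝ) (hx : (2 : ℝ) ^ n < x) :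
    Summable (fun i : ℕ =>
        genBinom j i * x ^ (-(i : ℝ)) * ∑ k ∈ Finset.Icc 1 (2 ^ n), tmSign k * (k : ℝ) ^ i)
      ∧ ∑ k ∈ Finset.Icc 1 (2 ^ n), tmSign k * (x + k) ^ j
        = x ^ j * ∑' i : ℕ,
            genBinom j i * x ^ (-(i : ℝ)) * ∑ k ∈ Finset.Icc 1 (2 ^ n), tmSign k * (k : ℝ) ^ i := by
  have hx0 : (0:ℝ) < x := lt_trans (by positivity) hx
  set T : ℕ → ℝ := fun i =>
    genBinom j i * x ^ (-(i : ℝ)) * ∑ k ∈ Finset.Icc 1 (2 ^ n), tmSign k * (k : ℝ) ^ i with hT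
  have key : ∀ k ∈ Finset.Icc 1 (2^n),
      HasSum (fun i : ℕ => tmSign k * (x ^ j * (genBinom j i * ((k:ℝ)/x) ^ i)))
        (tmSign k * (x + (k:ℝ)) ^ j) := by
    intro k hk
    have hk2 : (k:ℝ) ≤ (2:ℝ)^n := by
      have := (Finset.mem_Icc.mp hk).2
      exact_mod_cast Nat.cast_le.mpr this |>.trans_eq (by push_cast; ring)
    have ht0 : 0 ≤ (k:ℝ)/x := by positivity
    have ht1 : (k:ℝ)/x < 1 := (div_lt_one hx0).mpr (lt_of_le_of_lt hk2 hx)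
    have hbs := hasSum_genBinom j hj ht0 ht1
    have hxk : x + (k:ℝ) = x * (1 + (k:ℝ)/x) := by field_simp
    have hrw : (x + (k:ℝ)) ^ j = x ^ j * (1 + (k:ℝ)/x) ^ j := by
      rw [hxk, Real.mul_rpow hx0.le (by positivity)]
    rw [hrw]
    exact (hbs.mul_left (x ^ j)).mul_left (tmSign k)
  have H := hasSum_sum key
  have hfun : (fun i : ℕ => ∑ k ∈ Finset.Icc 1 (2^n),
        tmSign k * (x ^ j * (genBinom j i * ((k:ℝ)/x) ^ i)))
      = fun i : ℕ => x ^ j * T i := by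
    funext i
    have hxi : x ^ (-(i : ℝ)) = ((x:ℝ) ^ i)⁻¹ := by
      rw [Real.rpow_neg hx0.le, Real.rpow_natCast]
    rw [hT]
    simp only [hxi, Finset.mul_sum]
    refine Finset.sum_congr rfl fun k hk => ?_
    rw [div_pow]
    ring
  rw [hfun] at H
  have hxj : x ^ j ≠ 0 := (Real.rpow_pos_of_pos hx0 j).ne'
  constructor
  · have := H.summable.mul_left ((x ^ j)⁻¹)
    refine this.congr fun i => ?_
    rw [inv_mul_cancel_left₀ hxj]
  · rw [← H.tsum_eq, tsum_mul_left]
end
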